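/- arXiv:2512.03243 — 2 statements merged into one kernel-verified Lean document; each statement's English description precedes it below -/
import Mathlib

section
/- Let Z be an integrable real-valued random variable on a probability space, and let α ∈ [0,1). Assume P(Z = VaR_α(Z)) = 0. Then CVaR_α(Z) = inf_{η ∈ ℝ} { η + E[(Z−η)⁺]/(1−α) }, and the infimum is attained at η = VaR_α(Z), i.e. CVaR_α(Z) = VaR_α(Z) + E[(Z−VaR_α(Z))⁺]/(1−α). -/
open MeasureTheory Filter Topology

/-- **Rockafellar–Uryasev variational formula for CVaR.**
`VaR` is the `α`-quantile (infimum of `r` with `P(Z ≤ r) ≥ α`), and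
`CVaR = E[Z | Z ≥ VaR]`.  Under the no-atom condition `P(Z = VaR) = 0`,
`CVaR` equals the infimum over `η ∈ ℝ` of `η + E[(Z - η)⁺]/(1 - α)`,
and the infimum is attained at `η = VaR`. -/
theorem cvar_variational {Ω : Type*} [MeasurableSpace Ω] (P : Measure Ω)
    [IsProbabilityMeasure P]
    (Z : Ω → ℝ) (hZmeas : Measurable Z) (hZint : Integrable Z P)
    (α : ℝ) (hα0 : 0 ≤ α) (hα1 : α < 1)
    (VaR : ℝ)
    (hVaR : IsGLB {r : ℝ | ENNReal.ofReal α ≤ P {ω | Z ω ≤ r}} VaR)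
    (hatom : P {ω | Z ω = VaR} = 0)
    (CVaR : ℝ)
    (hCVaR : CVaR = (∫ ω in {ω | VaR ≤ Z ω}, Z ω ∂P) / (P {ω | VaR ≤ Z ω}).toReal) :
    CVaR = (⨅ η : ℝ, (η + (∫ ω, max (Z ω - η) 0 ∂P) / (1 - α))) ∧
      CVaR = VaR + (∫ ω, max (Z ω - VaR) 0 ∂P) / (1 - α) := by
  have hα' : (0:ℝ) < 1 - α := by linarith
  set A : Set Ω := {ω | VaR ≤ Z ω} with hAdef
  have hAmeas : MeasurableSet A := measurableSet_le measurable_const hZmeas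
  -- Step A : P(Z ≤ VaR) ≥ α
  have hle : ENNReal.ofReal α ≤ P {ω | Z ω ≤ VaR} := by
    have hseq : ∀ n : ℕ, ENNReal.ofReal α ≤ P {ω | Z ω ≤ VaR + ((n:ℝ)+1)⁻¹} := by
      intro n
      obtain ⟨s, hsS, hs⟩ : ∃ s ∈ {r : ℝ | ENNReal.ofReal α ≤ P {ω | Z ω ≤ r}},
          s < VaR + ((n:ℝ)+1)⁻¹ := by
        by_contra h
        push_neg at h
        have h1 : VaR + ((n:ℝ)+1)⁻¹ ≤ VaR := hVaR.2 h
        have h2 : (0:ℝ) < ((n:ℝ)+1)⁻¹ := by positivity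
        linarith
      exact hsS.trans (measure_mono fun ω hω => le_trans hω hs.le)
    have hset : {ω | Z ω ≤ VaR} = ⋂ n : ℕ, {ω | Z ω ≤ VaR + ((n:ℝ)+1)⁻¹} := by
      ext ω
      simp only [Set.mem_iInter, Set.mem_setOf_eq]
      constructor
      · intro h n
        have : (0:ℝ) < ((n:ℝ)+1)⁻¹ := by positivity
        linarith
      · intro h
        by_contra hlt
        push_neg at hlt
        obtain ⟨n, hn⟩ := exists_nat_one_div_lt (show (0:ℝ) < Z ω - VaR by linarith)
        have h2 := h n
        rw [one_div] at hn
        linarith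
    have hanti : Antitone (fun n : ℕ => {ω | Z ω ≤ VaR + ((n:ℝ)+1)⁻¹}) := by
      intro n m hnm ω hω
      simp only [Set.mem_setOf_eq] at *
      have hc : ((m:ℝ)+1)⁻¹ ≤ ((n:ℝ)+1)⁻¹ := by
        apply inv_anti₀ (by positivity)
        have : (n:ℝ) ≤ m := by exact_mod_cast hnm
        linarith
      linarith
    have htend := tendsto_measure_iInter_atTop (μ := P)
      (s := fun n : ℕ => {ω | Z ω ≤ VaR + ((n:ℝ)+1)⁻¹})
      (fun n => (measurableSet_le hZmeas measurable_const).nullMeasurableSet)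
      hanti ⟨0, measure_ne_top _ _⟩
    rw [hset]
    exact ge_of_tendsto' htend hseq
  -- Step B : P(Z < VaR) ≤ α
  have hlt : P {ω | Z ω < VaR} ≤ ENNReal.ofReal α := by
    have hseq : ∀ n : ℕ, P {ω | Z ω ≤ VaR - ((n:ℝ)+1)⁻¹} ≤ ENNReal.ofReal α := by
      intro n
      by_contra h
      push_neg at h
      have hmem : (VaR - ((n:ℝ)+1)⁻¹) ∈ {r : ℝ | ENNReal.ofReal α ≤ P {ω | Z ω ≤ r}} := h.le
      have h1 := hVaR.1 hmem
      have h2 : (0:ℝ) < ((n:ℝ)+1)⁻¹ := by positivity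
      linarith
    have hset : {ω | Z ω < VaR} = ⋃ n : ℕ, {ω | Z ω ≤ VaR - ((n:ℝ)+1)⁻¹} := by
      ext ω
      simp only [Set.mem_iUnion, Set.mem_setOf_eq]
      constructor
      · intro h
        obtain ⟨n, hn⟩ := exists_nat_one_div_lt (show (0:ℝ) < VaR - Z ω by linarith)
        rw [one_div] at hn
        exact ⟨n, by linarith⟩
      · rintro ⟨n, hn⟩
        have : (0:ℝ) < ((n:ℝ)+1)⁻¹ := by positivity
        linarith
    have hmono : Monotone (fun n : ℕ => {ω | Z ω ≤ VaR - ((n:ℝ)+1)⁻¹}) := by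
      intro n m hnm ω hω
      simp only [Set.mem_setOf_eq] at *
      have hc : ((m:ℝ)+1)⁻¹ ≤ ((n:ℝ)+1)⁻¹ := by
        apply inv_anti₀ (by positivity)
        have : (n:ℝ) ≤ m := by exact_mod_cast hnm
        linarith
      linarith
    have htend := tendsto_measure_iUnion_atTop (μ := P)
      (s := fun n : ℕ => {ω | Z ω ≤ VaR - ((n:ℝ)+1)⁻¹}) hmono
    rw [hset]
    exact le_of_tendsto' htend hseq
  -- equalities
  have hle' : P {ω | Z ω ≤ VaR} ≤ P {ω | Z ω < VaR} := by
    have hsub : {ω | Z ω ≤ VaR} ⊆ {ω | Z ω < VaR} ∪ {ω | Z ω = VaR} := by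
      intro ω hω
      rcases lt_or_eq_of_le (show Z ω ≤ VaR from hω) with h | h
      · exact Or.inl h
      · exact Or.inr h
    calc P {ω | Z ω ≤ VaR} ≤ P ({ω | Z ω < VaR} ∪ {ω | Z ω = VaR}) := measure_mono hsub
      _ ≤ P {ω | Z ω < VaR} + P {ω | Z ω = VaR} := measure_union_le _ _
      _ = P {ω | Z ω < VaR} := by rw [hatom, add_zero]
  have hlt_eq : P {ω | Z ω < VaR} = ENNReal.ofReal α := le_antisymm hlt (hle.trans hle')
  have hPA : P A = ENNReal.ofReal (1 - α) := by
    have hcompl : A = {ω | Z ω < VaR}ᶜ := by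
      ext ω; simp [hAdef, not_lt]
    rw [hcompl, measure_compl (measurableSet_lt hZmeas measurable_const) (measure_ne_top _ _),
      measure_univ, hlt_eq, ENNReal.ofReal_sub _ hα0, ENNReal.ofReal_one]
  have hPAtoReal : (P A).toReal = 1 - α := by
    rw [hPA, ENNReal.toReal_ofReal (by linarith)]
  -- integrability
  have hint : ∀ η : ℝ, Integrable (fun ω => max (Z ω - η) 0) P := by
    intro η
    exact (hZint.sub (integrable_const η)).sup (integrable_const 0)
  -- value at VaR
  have hIVaR : ∫ ω, max (Z ω - VaR) 0 ∂P = (∫ ω in A, Z ω ∂P) - VaR * (1 - α) := by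
    have h1 : ∫ ω in A, max (Z ω - VaR) 0 ∂P = ∫ ω in A, (Z ω - VaR) ∂P := by
      refine setIntegral_congr_fun hAmeas fun ω hω => ?_
      have hv : VaR ≤ Z ω := hω
      exact max_eq_left (by linarith)
    have h2 : ∫ ω in Aᶜ, max (Z ω - VaR) 0 ∂P = 0 := by
      have : ∀ ω ∈ Aᶜ, max (Z ω - VaR) 0 = 0 := by
        intro ω hω
        have hv : Z ω < VaR := not_le.mp hω
        exact max_eq_right (by linarith)
      rw [setIntegral_congr_fun hAmeas.compl this, integral_zero]
    rw [← integral_add_compl hAmeas (hint VaR), h1, h2, add_zero,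
      integral_sub hZint.integrableOn (integrable_const VaR).integrableOn,
      setIntegral_const, measureReal_def, hPAtoReal, smul_eq_mul]
    ring
  -- key inequality
  have hkey : ∀ η : ℝ, (∫ ω, max (Z ω - VaR) 0 ∂P) + (VaR - η) * (1 - α)
      ≤ ∫ ω, max (Z ω - η) 0 ∂P := by
    intro η
    have hind : Integrable (fun ω => (VaR - η) * A.indicator (fun _ => (1:ℝ)) ω) P :=
      ((integrable_const (1:ℝ)).indicator hAmeas).const_mul _
    have hptw : ∀ ω, max (Z ω - VaR) 0 + (VaR - η) * A.indicator (fun _ => (1:ℝ)) ω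
        ≤ max (Z ω - η) 0 := by
      intro ω
      by_cases hω : ω ∈ A
      · have hv : VaR ≤ Z ω := hω
        rw [Set.indicator_of_mem hω, max_eq_left (show (0:ℝ) ≤ Z ω - VaR by linarith)]
        have he : Z ω - VaR + (VaR - η) * 1 = Z ω - η := by ring
        rw [he]
        exact le_max_left _ _
      · have hv : Z ω < VaR := not_le.mp hω
        rw [Set.indicator_of_notMem hω, max_eq_right (show Z ω - VaR ≤ (0:ℝ) by linarith)]
        simpa using le_max_right (Z ω - η) 0
    calc (∫ ω, max (Z ω - VaR) 0 ∂P) + (VaR - η) * (1 - α)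
        = ∫ ω, (max (Z ω - VaR) 0 + (VaR - η) * A.indicator (fun _ => (1:ℝ)) ω) ∂P := by
          rw [integral_add (hint VaR) hind, integral_const_mul,
            integral_indicator_const (1:ℝ) hAmeas, measureReal_def, hPAtoReal, smul_eq_mul, mul_one]
      _ ≤ ∫ ω, max (Z ω - η) 0 ∂P := integral_mono ((hint VaR).add hind) (hint η) hptw
  -- attained value
  have hfVaR : CVaR = VaR + (∫ ω, max (Z ω - VaR) 0 ∂P) / (1 - α) := by
    rw [hCVaR, hPAtoReal, hIVaR]
    field_simp
    ring
  refine ⟨?_, hfVaR⟩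
  have hlb : ∀ η : ℝ, VaR + (∫ ω, max (Z ω - VaR) 0 ∂P) / (1 - α)
      ≤ η + (∫ ω, max (Z ω - η) 0 ∂P) / (1 - α) := by
    intro η
    have h := hkey η
    have h2 : ((∫ ω, max (Z ω - VaR) 0 ∂P) + (VaR - η) * (1 - α)) / (1 - α)
        ≤ (∫ ω, max (Z ω - η) 0 ∂P) / (1 - α) := by gcongr
    rw [add_div, mul_div_assoc, div_self hα'.ne', mul_one] at h2
    linarith
  rw [hfVaR]
  have hbdd : BddBelow (Set.range fun η : ℝ => η + (∫ ω, max (Z ω - η) 0 ∂P) / (1 - α)) := by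
    refine ⟨VaR + (∫ ω, max (Z ω - VaR) 0 ∂P) / (1 - α), ?_⟩
    rintro x ⟨η, rfl⟩
    exact hlb η
  exact le_antisymm (le_ciInf hlb) (ciInf_le hbdd VaR)
end

section
/- Let (X,d) be a complete separable metric space, p ∈ (0,1], and let a : [0,∞) → [0,∞) be a continuous, strictly increasing function with a(0) = 0. Let μ be a Borel probability measure on X with finite first moment satisfying the (a,c)-transportation-cost inequality: a(W_c(μ,ν')) ≤ H(ν'|μ) for every Borel probability measure ν' ≪ μ. Then for every Borel probability measure ν on X with finite first moment, every f ∈ C^p, and every t ≥ 0 such that H(ν|μ) ≤ a(t), one has ∫ f dν ≤ t + ∫ f dμ. -/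
open MeasureTheory
open scoped ENNReal Classical

/-- `π` is a coupling of `μ` and `ν`: its marginals are `μ` and `ν`. -/
def IsCoupling {X : Type*} [MeasurableSpace X]
    (π : Measure (X × X)) (μ ν : Measure X) : Prop :=
  π.map Prod.fst = μ ∧ π.map Prod.snd = ν

/-- The transportation cost between `μ` and `ν` for the cost `c(x,y) = d(x,y)^p`. -/
noncomputable def Wc {X : Type*} [MetricSpace X] [MeasurableSpace X]
    (p : ℝ) (μ ν : Measure X) : ℝ :=
  sInf {c : ℝ | ∃ π : Measure (X × X), IsCoupling π μ ν ∧
    c = ∫ q : X × X, dist q.1 q.2 ^ p ∂π}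

/-- The relative entropy `H(ν | μ) = ∫ log (dν/dμ) dν` if `ν ≪ μ` (and the
integral exists), and `+∞` otherwise. -/

noncomputable def relEntropy {X : Type*} [MeasurableSpace X] (ν μ : Measure X) : ℝ≥0∞ :=
  if ν ≪ μ ∧ Integrable (fun x => Real.log (ν.rnDeriv μ x).toReal) ν
  then ENNReal.ofReal (∫ x, Real.log (ν.rnDeriv μ x).toReal ∂ν)
  else ⊤

/-- Under the `(a, c)`-transportation-cost inequality for `μ` with cost
`c(x,y) = d(x,y)^p` and deviation function `a` (continuous, strictly increasing,
`a 0 = 0`), every probability measure `ν` with finite first moment, every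
`f ∈ C^p` and every `t ≥ 0` with `H(ν|μ) ≤ a t` satisfy `∫ f dν ≤ t + ∫ f dμ`. -/
theorem integral_le_of_TCI {X : Type*} [MetricSpace X] [CompleteSpace X]
    [TopologicalSpace.SeparableSpace X] [MeasurableSpace X] [BorelSpace X]
    (p : ℝ) (hp0 : 0 < p) (hp1 : p ≤ 1)
    (a : ℝ → ℝ) (ha_cont : ContinuousOn a (Set.Ici 0))
    (ha_mono : StrictMonoOn a (Set.Ici 0)) (ha0 : a 0 = 0)
    (μ : Measure X) [IsProbabilityMeasure μ]
    (hμ : ∃ x₀ : X, Integrable (fun x => dist x x₀) μ)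
    (hTCI : ∀ ν' : Measure X, IsProbabilityMeasure ν' → ν' ≪ μ →
      ENNReal.ofReal (a (Wc p μ ν')) ≤ relEntropy ν' μ)
    (ν : Measure X) [IsProbabilityMeasure ν]
    (hν : ∃ x₀ : X, Integrable (fun x => dist x x₀) ν)
    (f : X → ℝ) (hf : ∀ x y, |f x - f y| ≤ dist x y ^ p)
    (t : ℝ) (ht : 0 ≤ t) (hent : relEntropy ν μ ≤ ENNReal.ofReal (a t)) :
    (∫ x, f x ∂ν) ≤ t + ∫ x, f x ∂μ := by
  classical
  haveI : SecondCountableTopology X := UniformSpace.secondCountable_of_separable X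
  obtain ⟨x₀, hμint⟩ := hμ
  obtain ⟨x₁, hνint'⟩ := hν
  -- first moment of ν at x₀
  have hνint : Integrable (fun x => dist x x₀) ν := by
    refine (hνint'.add (integrable_const (dist x₁ x₀))).mono'
      ((continuous_id.dist continuous_const).aestronglyMeasurable) ?_
    filter_upwards with x
    have h1 : dist x x₀ ≤ dist x x₁ + dist x₁ x₀ := dist_triangle _ _ _
    have h2 : (0:ℝ) ≤ dist x x₁ := dist_nonneg
    rw [Real.norm_eq_abs, abs_of_nonneg dist_nonneg]
    exact h1
  -- basic rpow bound : d ^ p ≤ 1 + d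
  have hrpow : ∀ d : ℝ, 0 ≤ d → d ^ p ≤ 1 + d := by
    intro d hd
    rcases le_or_gt d 1 with h | h
    · have := Real.rpow_le_one hd h hp0.le
      linarith
    · have h1 : d ^ p ≤ d ^ (1:ℝ) := Real.rpow_le_rpow_of_exponent_le h.le hp1
      rw [Real.rpow_one] at h1
      linarith
  -- continuity of f
  have hfc : Continuous f := by
    rw [Metric.continuous_iff]
    intro x ε hε
    refine ⟨ε ^ (1/p), Real.rpow_pos_of_pos hε _, fun y hy => ?_⟩
    have hd : dist y x ^ p < (ε ^ (1/p)) ^ p := by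
      apply Real.rpow_lt_rpow dist_nonneg hy hp0
    rw [← Real.rpow_mul hε.le, one_div, inv_mul_cancel₀ hp0.ne', Real.rpow_one] at hd
    calc dist (f y) (f x) = |f y - f x| := rfl
      _ ≤ dist y x ^ p := hf y x
      _ < ε := hd
  -- integrability of f wrt any measure with finite first moment
  have hfint : ∀ (m : Measure X), IsProbabilityMeasure m →
      Integrable (fun x => dist x x₀) m → Integrable f m := by
    intro m _ hm
    refine ((integrable_const (|f x₀| + 1)).add hm).mono'
      hfc.aestronglyMeasurable ?_
    filter_upwards with x
    have h1 : |f x - f x₀| ≤ dist x x₀ ^ p := hf x x₀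
    have h2 : dist x x₀ ^ p ≤ 1 + dist x x₀ := hrpow _ dist_nonneg
    rw [Real.norm_eq_abs]
    have : |f x| ≤ |f x₀| + |f x - f x₀| := by
      have := abs_add_le (f x₀) (f x - f x₀)
      simpa using this
    simp only [Pi.add_apply]
    linarith
  have hfμ : Integrable f μ := hfint μ inferInstance hμint
  have hfν : Integrable f ν := hfint ν inferInstance hνint
  -- continuity of cost
  have hgc : Continuous (fun q : X × X => dist q.1 q.2 ^ p) := by
    exact (continuous_iff_continuousAt.2 fun x =>
      Real.continuousAt_rpow_const _ _ (Or.inr hp0.le)).comp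
      (continuous_fst.dist continuous_snd)
  -- main estimate for an arbitrary coupling
  have hmain : ∀ π : Measure (X × X), IsCoupling π μ ν →
      (∫ x, f x ∂ν) - (∫ x, f x ∂μ) ≤ ∫ q : X × X, dist q.1 q.2 ^ p ∂π := by
    intro π ⟨hπ1, hπ2⟩
    haveI : IsProbabilityMeasure π := ⟨by
      rw [← measure_univ (μ := μ), ← hπ1,
        Measure.map_apply measurable_fst MeasurableSet.univ, Set.preimage_univ]⟩
    have h1 : Integrable (fun q : X × X => f q.1) π := by
      have := hfμ
      rw [← hπ1] at this
      exact (integrable_map_measure hfc.aestronglyMeasurable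
        measurable_fst.aemeasurable).1 this
    have h2 : Integrable (fun q : X × X => f q.2) π := by
      have := hfν
      rw [← hπ2] at this
      exact (integrable_map_measure hfc.aestronglyMeasurable
        measurable_snd.aemeasurable).1 this
    have hd1 : Integrable (fun q : X × X => dist q.1 x₀) π := by
      have := hμint
      rw [← hπ1] at this
      exact (integrable_map_measure ((continuous_id.dist
        continuous_const).aestronglyMeasurable) measurable_fst.aemeasurable).1 this
    have hd2 : Integrable (fun q : X × X => dist q.2 x₀) π := by
      have := hνint
      rw [← hπ2] at this
      exact (integrable_map_measure ((continuous_id.dist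
        continuous_const).aestronglyMeasurable) measurable_snd.aemeasurable).1 this
    have hgint : Integrable (fun q : X × X => dist q.1 q.2 ^ p) π := by
      refine ((integrable_const (1:ℝ)).add (hd1.add hd2)).mono'
        hgc.aestronglyMeasurable ?_
      filter_upwards with q
      have h3 : dist q.1 q.2 ≤ dist q.1 x₀ + dist q.2 x₀ := by
        calc dist q.1 q.2 ≤ dist q.1 x₀ + dist x₀ q.2 := dist_triangle _ _ _
          _ = dist q.1 x₀ + dist q.2 x₀ := by rw [dist_comm x₀]
      have h4 : dist q.1 q.2 ^ p ≤ 1 + dist q.1 q.2 := hrpow _ dist_nonneg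
      rw [Real.norm_eq_abs, abs_of_nonneg (Real.rpow_nonneg dist_nonneg _)]
      simp only [Pi.add_apply]
      linarith
    have hIμ : (∫ x, f x ∂μ) = ∫ q : X × X, f q.1 ∂π := by
      rw [← hπ1, integral_map measurable_fst.aemeasurable hfc.aestronglyMeasurable]
    have hIν : (∫ x, f x ∂ν) = ∫ q : X × X, f q.2 ∂π := by
      rw [← hπ2, integral_map measurable_snd.aemeasurable hfc.aestronglyMeasurable]
    rw [hIμ, hIν, ← integral_sub h2 h1]
    refine integral_mono (h2.sub h1) hgint fun q => ?_
    calc f q.2 - f q.1 ≤ |f q.2 - f q.1| := le_abs_self _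
      _ ≤ dist q.2 q.1 ^ p := hf _ _
      _ = dist q.1 q.2 ^ p := by rw [dist_comm]
  -- the set of costs is nonempty
  have hne : ∃ c : ℝ, ∃ π : Measure (X × X), IsCoupling π μ ν ∧
      c = ∫ q : X × X, dist q.1 q.2 ^ p ∂π := by
    refine ⟨∫ q : X × X, dist q.1 q.2 ^ p ∂(μ.prod ν), μ.prod ν, ⟨?_, ?_⟩, rfl⟩
    · rw [Measure.map_fst_prod, measure_univ, one_smul]
    · rw [Measure.map_snd_prod, measure_univ, one_smul]
  -- key bounds on Wc
  have hWlb : (∫ x, f x ∂ν) - (∫ x, f x ∂μ) ≤ Wc p μ ν := by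
    refine le_csInf ?_ ?_
    · obtain ⟨c, hc⟩ := hne; exact ⟨c, hc⟩
    · rintro c ⟨π, hπ, rfl⟩
      exact hmain π hπ
  have hWnn : 0 ≤ Wc p μ ν := by
    refine Real.sInf_nonneg ?_
    rintro c ⟨π, hπ, rfl⟩
    exact integral_nonneg fun q => Real.rpow_nonneg dist_nonneg _
  -- absolute continuity from finiteness of entropy
  have hac : ν ≪ μ := by
    by_contra h
    have : relEntropy ν μ = ⊤ := by
      rw [relEntropy, if_neg]
      tauto
    rw [this] at hent
    exact (lt_irrefl ⊤ (lt_of_le_of_lt hent ENNReal.ofReal_lt_top)).elim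
  -- apply TCI
  have hTCIν := hTCI ν inferInstance hac
  have hat : 0 ≤ a t := by
    rw [← ha0]
    exact ha_mono.monotoneOn Set.self_mem_Ici ht ht
  have haW : a (Wc p μ ν) ≤ a t := by
    have := le_trans hTCIν hent
    exact (ENNReal.ofReal_le_ofReal_iff hat).1 this
  have hWt : Wc p μ ν ≤ t := by
    by_contra h
    push_neg at h
    exact absurd haW (not_le.2 (ha_mono ht (le_trans ht h.le) h))
  linarith
end
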